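/- For each p ∈ {0,…,n−1}, the inversion formula h_p = (1/n) · Σ_{t=0}^{n−1} ξ^{t(p+r)} g_t holds in the polynomial ring ℂ[x_1,…,x_r]. -/

import Mathlib

open MvPolynomial

/-- Gornik's generator `g_t = ∏_{k=1}^r ∑_{a=0}^{n-1} ξ^{-t(a+1)} x_k^a`
in the polynomial ring `ℂ[x_1, …, x_r]`. -/
noncomputable def gornik (n r : ℕ) (ξ : ℂ) (t : ℤ) : MvPolynomial (Fin r) ℂ :=
  ∏ k : Fin r, ∑ a ∈ Finset.range n, C (ξ ^ (-(t * ((a : ℤ) + 1)))) * X k ^ a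

/-- The `n`-degree-`p` component of `f ∈ ℂ[x_1,…,x_r]`: the sum of those terms of `f`
whose monomial has total degree congruent to `p` modulo `n`. -/
noncomputable def ncomp (n : ℕ) {r : ℕ} (p : ℕ) (f : MvPolynomial (Fin r) ℂ) :
    MvPolynomial (Fin r) ℂ :=
  ∑ m ∈ f.support.filter (fun m => (∑ k : Fin r, m k) % n = p % n),
    monomial m (f.coeff m)

private lemma zpow_sum_eq {α : Type*} (s : Finset α) (x : ℂ) (hx : x ≠ 0) (f : α → ℤ) :
    x ^ (∑ i ∈ s, f i) = ∏ i ∈ s, x ^ f i := by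
  classical
  induction s using Finset.induction with
  | empty => simp
  | insert _ _ h ih => rw [Finset.sum_insert h, Finset.prod_insert h, zpow_add₀ hx, ih]

private lemma coeff_gornik (n r : ℕ) (ξ : ℂ) (hξ : ξ ≠ 0) (t : ℤ) (m : Fin r →₀ ℕ) :
    coeff m (gornik n r ξ t)
      = if ∀ k, m k < n then ξ ^ (-(t * ((∑ k : Fin r, (m k : ℤ)) + r))) else 0 := by
  classical
  rw [gornik, Finset.prod_univ_sum]
  have hterm : ∀ g : Fin r → ℕ,
      (∏ k : Fin r, C (ξ ^ (-(t * ((g k : ℤ) + 1)))) * X k ^ g k)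
        = C (ξ ^ (-(t * ((∑ k : Fin r, (g k : ℤ)) + r)))) *
            monomial (Finsupp.equivFunOnFinite.symm g) 1 := by
    intro g
    rw [Finset.prod_mul_distrib, ← map_prod]
    congr 1
    · congr 1
      rw [← zpow_sum_eq _ ξ hξ]
      congr 1
      have hr : (r:ℤ) = ∑ _k : Fin r, (1:ℤ) := by simp
      rw [hr, ← Finset.sum_add_distrib, Finset.mul_sum, Finset.sum_neg_distrib]
    · rw [monomial_eq, map_one, one_mul, Finsupp.prod_pow]
      simp [Finsupp.equivFunOnFinite]
  simp only [hterm]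
  rw [coeff_sum]
  simp only [coeff_C_mul, coeff_monomial, Equiv.symm_apply_eq, mul_ite, mul_one, mul_zero]
  rw [Finset.sum_ite_eq' (Fintype.piFinset fun _ : Fin r => Finset.range n)
    (Finsupp.equivFunOnFinite m)]
  simp [Fintype.mem_piFinset]

private lemma coeff_ncomp (n : ℕ) {r : ℕ} (p : ℕ) (f : MvPolynomial (Fin r) ℂ)
    (m : Fin r →₀ ℕ) :
    coeff m (ncomp n p f)
      = if (∑ k : Fin r, m k) % n = p % n then coeff m f else 0 := by
  classical
  rw [ncomp, coeff_sum]
  simp only [coeff_monomial]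
  rw [Finset.sum_ite_eq' (f.support.filter (fun m => (∑ k : Fin r, m k) % n = p % n)) m]
  simp only [Finset.mem_filter, mem_support_iff]
  by_cases h : (∑ k : Fin r, m k) % n = p % n
  · by_cases h2 : coeff m f = 0 <;> simp [h, h2]
  · simp [h]

private lemma sum_zpow_eq (n : ℕ) (hn : 2 ≤ n) (ξ : ℂ)
    (hξ : ξ = Complex.exp (2 * Real.pi * Complex.I / n)) (d : ℤ) :
    ∑ t ∈ Finset.range n, ξ ^ ((t : ℤ) * d) = if (n : ℤ) ∣ d then (n : ℂ) else 0 := by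
  have hprim : IsPrimitiveRoot ξ n := by
    rw [hξ]; exact Complex.isPrimitiveRoot_exp n (by omega)
  have hterm : ∀ t : ℕ, ξ ^ ((t : ℤ) * d) = (ξ ^ d) ^ t := by
    intro t
    rw [mul_comm, zpow_mul, zpow_natCast]
  simp only [hterm]
  by_cases hd : (n : ℤ) ∣ d
  · have h1 : ξ ^ d = 1 := (hprim.zpow_eq_one_iff_dvd d).2 hd
    simp [h1, hd]
  · have h1 : ξ ^ d ≠ 1 := fun h => hd ((hprim.zpow_eq_one_iff_dvd d).1 h)
    rw [geom_sum_eq h1 n, if_neg hd]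
    have hnum : (ξ ^ d) ^ n = 1 := by
      rw [← zpow_natCast (ξ ^ d) n, ← zpow_mul, mul_comm, zpow_mul, zpow_natCast,
        hprim.pow_eq_one, one_zpow]
    rw [hnum, sub_self, zero_div]

/-- Inversion formula: `h_p = (1/n) ∑_{t=0}^{n-1} ξ^{t(p+r)} g_t`. -/
theorem ncomp_inversion (n r : ℕ) (hn : 2 ≤ n) (hr : 1 ≤ r) (ξ : ℂ)
    (hξ : ξ = Complex.exp (2 * Real.pi * Complex.I / n)) (p : ℕ) (hp : p < n) :
    ncomp n p (gornik n r ξ 0)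
        = C ((n : ℂ)⁻¹) *
            ∑ t ∈ Finset.range n,
              C (ξ ^ ((t : ℤ) * ((p : ℤ) + (r : ℤ)))) * gornik n r ξ (t : ℤ) := by
  classical
  have hξ0 : ξ ≠ 0 := by rw [hξ]; exact Complex.exp_ne_zero _
  have hnC : (n : ℂ) ≠ 0 := by
    simp only [ne_eq, Nat.cast_eq_zero]; omega
  apply MvPolynomial.ext
  intro m
  rw [coeff_ncomp, coeff_C_mul, coeff_sum]
  simp only [coeff_C_mul, coeff_gornik n r ξ hξ0]
  by_cases hm : ∀ k, m k < n
  · simp only [if_pos hm]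
    set D : ℤ := ∑ k : Fin r, ((m k : ℤ)) with hD
    have hterm : ∀ t : ℕ,
        ξ ^ ((t : ℤ) * ((p : ℤ) + (r : ℤ))) * ξ ^ (-((t : ℤ) * (D + r)))
          = ξ ^ ((t : ℤ) * ((p : ℤ) - D)) := by
      intro t; rw [← zpow_add₀ hξ0]; congr 1; ring
    simp only [hterm]
    rw [sum_zpow_eq n hn ξ hξ ((p : ℤ) - D)]
    have hcast : ((∑ k : Fin r, m k : ℕ) : ℤ) = D := by
      rw [hD]; push_cast; rfl
    have hdvd : ((∑ k : Fin r, m k) % n = p % n) ↔ (n : ℤ) ∣ ((p : ℤ) - D) := by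
      rw [← hcast]
      constructor
      · intro h
        have h2 : ((∑ k : Fin r, m k : ℕ) : ℤ) % (n : ℤ) = (p : ℤ) % (n : ℤ) := by
          exact_mod_cast h
        exact Int.ModEq.dvd h2
      · intro h
        have h2 : ((∑ k : Fin r, m k : ℕ) : ℤ) % (n : ℤ) = (p : ℤ) % (n : ℤ) :=
          Int.modEq_iff_dvd.2 h
        exact_mod_cast h2
    simp only [hdvd]
    by_cases hc : (n : ℤ) ∣ ((p : ℤ) - D)
    · rw [if_pos hc, if_pos hc]
      simp [inv_mul_cancel₀ hnC]
    · rw [if_neg hc, if_neg hc]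
      simp
  · simp [hm]
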